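/- Let A be a graded doset algebra with straightening law on a doset D over B and let I ⊆ D be a doset order ideal. Then the ring ideal AI is spanned over B by the standard monomials (β_1,β_2)⋯(β_{2ℓ−1},β_{2ℓ}) whose first factor (β_1,β_2) lies in I. -/

import Mathlib

/-- Flatten a list of pairs `(α_1,α_2)(α_3,α_4)⋯` into the list `α_1,α_2,α_3,…`. -/
def flat {ι : Type*} (l : List (ι × ι)) : List ι := l.flatMap fun p => [p.1, p.2]

/-- Lexicographic `≤` on sequences of poset elements. -/
def lexLE {ι : Type*} [PartialOrder ι] (a b : List ι) : Prop :=
  a = b ∨ List.Lex (· < ·) a b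

/-- The index type of standard monomials of a doset `D`: lists of pairs from `D`
whose flattened sequence is weakly increasing. -/
def Std {ι : Type*} [PartialOrder ι] (D : Set (ι × ι)) : Type _ :=
  {l : List (ι × ι) // (∀ p ∈ l, p ∈ D) ∧ (flat l).Chain' (· ≤ ·)}

/-- A graded doset algebra with straightening law (DASL) on a doset `D ⊆ ι × ι`
over `B`. -/
structure DASL (B : Type*) [CommRing B] (A : Type*) [CommRing A] [Algebra B A]
    (ι : Type*) [PartialOrder ι] (D : Set (ι × ι))
    (𝒜 : ℕ → Submodule B A) [GradedAlgebra 𝒜] where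
  doset_refl : ∀ a : ι, (a, a) ∈ D
  doset_le : ∀ p ∈ D, p.1 ≤ p.2
  doset_trans : ∀ a b c : ι, a ≤ b → b ≤ c →
    ((a, c) ∈ D ↔ (a, b) ∈ D ∧ (b, c) ∈ D)
  /-- `A_0 = B`. -/
  zero_eq : 𝒜 0 = 1
  /-- The doset elements inside `A`. -/
  emb : ι × ι → A
  /-- Each doset element is homogeneous of positive degree. -/
  homog : ∀ p ∈ D, ∃ d, 0 < d ∧ emb p ∈ 𝒜 d
  /-- The doset generates `A` as a `B`-algebra. -/
  generates : Algebra.adjoin B (emb '' D) = ⊤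
  /-- The standard monomials form a free `B`-module basis of `A`. -/
  bas : Module.Basis (Std D) B A
  bas_eq : ∀ l : Std D, bas l = (l.1.map emb).prod
  /-- Condition (3): each standard monomial `N` appearing in the standard
  representation of a product `M` of doset elements satisfies: every permutation of
  the flattened sequence of `M` is lexicographically ≥ the flattened sequence of `N`. -/
  lex_cond : ∀ m : List (ι × ι), (∀ p ∈ m, p ∈ D) →
    ∀ N : Std D, bas.repr ((m.map emb).prod) N ≠ 0 →
      ∀ l' : List ι, l'.Perm (flat m) → lexLE (flat N.1) l'
  /-- Condition (4): if some permutation of the factors of `M` gives a standard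
  monomial, that standard monomial appears with coefficient `±1`. -/
  coeff_cond : ∀ m : List (ι × ι), (∀ p ∈ m, p ∈ D) →
    ∀ N : Std D, (flat N.1).Perm (flat m) →
      bas.repr ((m.map emb).prod) N = 1 ∨ bas.repr ((m.map emb).prod) N = -1

namespace DASLAux

variable {B A ι : Type*} [CommRing B] [CommRing A] [Algebra B A]
    [PartialOrder ι] {D : Set (ι × ι)} {𝒜 : ℕ → Submodule B A} [GradedAlgebra 𝒜]
    (dasl : DASL B A ι D 𝒜)

lemma lex_head {α : Type*} {r : α → α → Prop} {a b : α} {l l' : List α}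
    (h : List.Lex r (a :: l) (b :: l')) : r a b ∨ a = b := by
  cases h with
  | cons _ => exact Or.inr rfl
  | rel h => exact Or.inl h

/-- The empty standard monomial. -/
def emptyStd : Std D := ⟨[], by constructor <;> simp [flat, List.Chain']⟩

lemma homog_prod (m : List (ι × ι)) (hm : ∀ p ∈ m, p ∈ D) :
    ∃ d, (m.map dasl.emb).prod ∈ 𝒜 d ∧ (m ≠ [] → 0 < d) := by
  induction m with
  | nil => exact ⟨0, by simpa using SetLike.one_mem_graded 𝒜, by simp⟩
  | cons p t ih =>
    obtain ⟨d, hd, hdpos⟩ := ih (fun q hq => hm q (List.mem_cons_of_mem _ hq))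
    obtain ⟨e, hepos, he⟩ := dasl.homog p (hm p (List.mem_cons_self))
    refine ⟨e + d, ?_, fun _ => by positivity⟩
    simpa using SetLike.mul_mem_graded he hd

/-- The coefficient of the empty standard monomial in any homogeneous element of
positive degree is zero. -/
lemma repr_empty_eq_zero {x : A} {d : ℕ} (hd : d ≠ 0) (hx : x ∈ 𝒜 d) :
    dasl.bas.repr x (emptyStd (D := D)) = 0 := by
  classical
  set f : A →ₗ[B] A :=
    (𝒜 0).subtype ∘ₗ
      ((DirectSum.component B ℕ (fun i => 𝒜 i) 0) ∘ₗ
        (DirectSum.decomposeLinearEquiv 𝒜).toLinearMap) with hf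
  have hfx : ∀ y : A, f y = (DirectSum.decompose 𝒜 y 0 : A) := fun y => rfl
  have h0 : f x = 0 := by
    rw [hfx]
    exact DirectSum.decompose_of_mem_ne 𝒜 hx hd
  have hxright : x = ((dasl.bas.repr x).sum fun N c => c • dasl.bas N) := by
    conv_lhs => rw [← dasl.bas.linearCombination_repr x]
    rw [Finsupp.linearCombination_apply]
  have hone : (1 : A) = dasl.bas (emptyStd (D := D)) := by
    rw [dasl.bas_eq]; simp [emptyStd]
  set c := dasl.bas.repr x (emptyStd (D := D)) with hc
  have hsum : f x = c • (1 : A) := by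
    conv_lhs => rw [hxright]
    rw [Finsupp.sum, map_sum]
    rw [Finset.sum_eq_single (emptyStd (D := D))]
    · rw [map_smul, ← hone, hfx, ← hc]
      congr 1
      exact DirectSum.decompose_of_mem_same 𝒜 (SetLike.one_mem_graded 𝒜)
    · intro N _ hN
      rw [map_smul]
      have hNne : N.1 ≠ [] := fun h => hN (Subtype.ext h)
      obtain ⟨e, he, hepos⟩ := homog_prod dasl N.1 N.2.1
      rw [hfx, dasl.bas_eq, DirectSum.decompose_of_mem_ne 𝒜 he (hepos hNne).ne', smul_zero]
    · intro h
      rw [Finsupp.notMem_support_iff.mp h, zero_smul]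
      exact map_zero f
  have h1 : c • dasl.bas (emptyStd (D := D)) = 0 := by
    rw [← hone, ← hsum, h0]
  have h2 := congrArg (fun z => dasl.bas.repr z (emptyStd (D := D))) h1
  simpa [hc] using h2

variable (I : Set (ι × ι))

/-- The spanning set of standard monomials whose first factor lies in `I`. -/
def stdI : Set A := {x : A | ∃ N : Std D, ∃ p l',
    N.1 = p :: l' ∧ p ∈ I ∧ x = (N.1.map dasl.emb).prod}

lemma prod_mem_span (hlow : ∀ p ∈ I, ∀ q ∈ D, q.1 ≤ p.1 → q ∈ I)
    (m : List (ι × ι)) (hm : ∀ p ∈ m, p ∈ D) {p : ι × ι} (hpm : p ∈ m) (hpI : p ∈ I) :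
    (m.map dasl.emb).prod ∈ Submodule.span B (stdI dasl I) := by
  classical
  set x := (m.map dasl.emb).prod with hxdef
  have hxright : x = ((dasl.bas.repr x).sum fun N c => c • dasl.bas N) := by
    conv_lhs => rw [← dasl.bas.linearCombination_repr x]
    rw [Finsupp.linearCombination_apply]
  rw [hxright, Finsupp.sum]
  refine Submodule.sum_mem _ fun N hN => Submodule.smul_mem _ _ (Submodule.subset_span ?_)
  have hcoeff : dasl.bas.repr x N ≠ 0 := Finsupp.mem_support_iff.mp hN
  -- N is nonempty
  have hNne : N.1 ≠ [] := by
    intro h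
    have hNe : N = emptyStd (D := D) := Subtype.ext h
    obtain ⟨d, hxd, hdpos⟩ := homog_prod dasl m hm
    have hmne : m ≠ [] := List.ne_nil_of_mem hpm
    exact hcoeff (hNe ▸ repr_empty_eq_zero dasl (hdpos hmne).ne' hxd)
  obtain ⟨q, l'', hN1⟩ := List.exists_cons_of_ne_nil hNne
  -- a permutation of flat m starting with p.1
  obtain ⟨t, ht⟩ : ∃ t, m.Perm (p :: t) := ⟨_, List.perm_cons_erase hpm⟩
  have hperm : (flat (p :: t)).Perm (flat m) := by
    unfold flat
    exact (ht.symm).flatMap_right _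
  have hlex := dasl.lex_cond m hm N hcoeff _ hperm
  have hflatN : flat N.1 = q.1 :: q.2 :: flat l'' := by rw [hN1]; rfl
  have hflatm : flat (p :: t) = p.1 :: p.2 :: flat t := rfl
  have hq1 : q.1 ≤ p.1 := by
    rcases hlex with h | h
    · rw [hflatN, hflatm] at h
      injection h with h1 _
      exact le_of_eq h1
    · rw [hflatN, hflatm] at h
      rcases lex_head h with h | h
      · exact le_of_lt h
      · exact le_of_eq h
  have hqD : q ∈ D := N.2.1 q (hN1 ▸ List.mem_cons_self)
  exact ⟨N, q, l'', hN1, hlow p hpI q hqD hq1, dasl.bas_eq N⟩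

lemma mul_mem_span (hlow : ∀ p ∈ I, ∀ q ∈ D, q.1 ≤ p.1 → q ∈ I)
    (a z : A) (hz : z ∈ Submodule.span B (stdI dasl I)) :
    a * z ∈ Submodule.span B (stdI dasl I) := by
  classical
  induction hz using Submodule.span_induction with
  | mem w hw =>
    obtain ⟨N, q, l', hN1, hqI, rfl⟩ := hw
    have haright : a = ((dasl.bas.repr a).sum fun M c => c • dasl.bas M) := by
      conv_lhs => rw [← dasl.bas.linearCombination_repr a]
      rw [Finsupp.linearCombination_apply]
    rw [haright, Finsupp.sum, Finset.sum_mul]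
    refine Submodule.sum_mem _ fun M _ => ?_
    rw [smul_mul_assoc]
    refine Submodule.smul_mem _ _ ?_
    have hprod : dasl.bas M * (N.1.map dasl.emb).prod
        = (((M.1 ++ N.1).map dasl.emb).prod) := by
      rw [dasl.bas_eq, List.map_append, List.prod_append]
    rw [hprod]
    refine prod_mem_span dasl I hlow _ ?_ (p := q) ?_ hqI
    · intro r hr
      rcases List.mem_append.mp hr with h | h
      · exact M.2.1 r h
      · exact N.2.1 r h
    · exact List.mem_append.mpr (Or.inr (hN1 ▸ List.mem_cons_self))
  | zero => rw [mul_zero]; exact Submodule.zero_mem _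
  | add u v _ _ hu hv => rw [mul_add]; exact Submodule.add_mem _ hu hv
  | smul b w _ hw => rw [mul_smul_comm]; exact Submodule.smul_mem _ _ hw

end DASLAux

theorem stmt_4 {B A ι : Type*} [CommRing B] [CommRing A] [Algebra B A]
    [PartialOrder ι] (D : Set (ι × ι)) (𝒜 : ℕ → Submodule B A) [GradedAlgebra 𝒜]
    (dasl : DASL B A ι D 𝒜) (I : Set (ι × ι)) (hID : I ⊆ D)
    (hlow : ∀ p ∈ I, ∀ q ∈ D, q.1 ≤ p.1 → q ∈ I) :
    (Ideal.span (dasl.emb '' I)).restrictScalars B =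
      Submodule.span B {x : A | ∃ N : Std D, ∃ p l',
        N.1 = p :: l' ∧ p ∈ I ∧ x = (N.1.map dasl.emb).prod} := by
  have hset : {x : A | ∃ N : Std D, ∃ p l',
      N.1 = p :: l' ∧ p ∈ I ∧ x = (N.1.map dasl.emb).prod} = DASLAux.stdI dasl I := rfl
  rw [hset]
  apply le_antisymm
  · intro x hx
    replace hx : x ∈ Ideal.span (dasl.emb '' I) := hx
    induction hx using Submodule.span_induction with
    | mem w hw =>
      obtain ⟨p, hpI, rfl⟩ := hw
      have : dasl.emb p = (([p] : List (ι × ι)).map dasl.emb).prod := by simp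
      rw [this]
      exact DASLAux.prod_mem_span dasl I hlow [p]
        (by simpa using hID hpI) (List.mem_singleton_self p) hpI
    | zero => exact Submodule.zero_mem _
    | add u v _ _ hu hv => exact Submodule.add_mem _ hu hv
    | smul a w _ hw =>
      have : a • w = a * w := rfl
      rw [this]
      exact DASLAux.mul_mem_span dasl I hlow a w hw
  · rw [Submodule.span_le]
    rintro x ⟨N, p, l', hN1, hpI, rfl⟩
    show (N.1.map dasl.emb).prod ∈ Ideal.span (dasl.emb '' I)
    rw [hN1, List.map_cons, List.prod_cons]
    exact Ideal.mul_mem_right _ _ (Ideal.subset_span ⟨p, hpI, rfl⟩)
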